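/- In the cone |arg ζ| ≤ π/2 - δ (0 < δ ≤ π/2) in the upper half-plane, Γ_{τk}(ζ) → i(kτ)^3 as ζ → ∞; i.e. all polynomially growing terms of the spectral function cancel against the asymptotic expansion of Z, leaving the constant i(kτ)^3 plus O(|ζ|^{-1}). -/

import Mathlib

open MeasureTheory Real Complex Filter Asymptotics

private lemma cube_le_exp {s : ℝ} (hs : 0 ≤ s) : s ^ 3 ≤ 27 * Real.exp s := by
  have h1 : 1 + s / 3 ≤ Real.exp (s / 3) := by
    have := Real.add_one_le_exp (s / 3); linarith
  have h2 : Real.exp s = Real.exp (s / 3) ^ 3 := by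
    rw [← Real.exp_nat_mul]; push_cast; ring_nf
  have h3 : (1 + s / 3) ^ 3 ≤ Real.exp (s / 3) ^ 3 := by
    apply pow_le_pow_left₀ (by positivity) h1
  nlinarith [sq_nonneg s, sq_nonneg (s/3)]

private lemma weight_le {n : ℕ} (hn : n ≤ 6) (v : ℝ) :
    |v| ^ n ≤ 1729 * Real.exp (v ^ 2 / 4) := by
  have hv6 : |v| ^ 6 ≤ 1728 * Real.exp (v ^ 2 / 4) := by
    have h := cube_le_exp (s := v ^ 2 / 4) (by positivity)
    have : |v| ^ 6 = 64 * (v ^ 2 / 4) ^ 3 := by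
      rw [show (6:ℕ) = 2*3 from rfl, pow_mul, _root_.sq_abs]; ring
    rw [this]; linarith
  have hexp : (1:ℝ) ≤ Real.exp (v ^ 2 / 4) := by
    rw [show (1:ℝ) = Real.exp 0 from (Real.exp_zero).symm]
    exact Real.exp_le_exp.mpr (by positivity)
  rcases le_or_gt |v| 1 with h | h
  · have : |v| ^ n ≤ 1 := pow_le_one₀ (abs_nonneg v) h
    nlinarith
  · have : |v| ^ n ≤ |v| ^ 6 := pow_le_pow_right₀ h.le hn
    nlinarith

private lemma gauss_pt_le {n : ℕ} (hn : n ≤ 6) (v : ℝ) :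
    |v| ^ n * Real.exp (-v ^ 2 / 2) ≤ 1729 * Real.exp (-(v ^ 2 / 4)) := by
  have h := weight_le hn v
  have he : Real.exp (v ^ 2 / 4) * Real.exp (-v ^ 2 / 2) = Real.exp (-(v ^ 2 / 4)) := by
    rw [← Real.exp_add]; congr 1; ring
  calc |v| ^ n * Real.exp (-v ^ 2 / 2)
      ≤ 1729 * Real.exp (v ^ 2 / 4) * Real.exp (-v ^ 2 / 2) := by
        apply mul_le_mul_of_nonneg_right h (Real.exp_nonneg _)
    _ = 1729 * Real.exp (-(v ^ 2 / 4)) := by rw [mul_assoc, he]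

private lemma integrable_poly_gauss {n : ℕ} (hn : n ≤ 6) :
    Integrable (fun v : ℝ => v ^ n * Real.exp (-v ^ 2 / 2)) := by
  have hbase : Integrable (fun v : ℝ => 1729 * Real.exp (-(4⁻¹:ℝ) * v ^ 2)) :=
    (integrable_exp_neg_mul_sq (by norm_num : (0:ℝ) < 4⁻¹)).const_mul 1729
  apply hbase.mono'
  · exact (Continuous.mul (continuous_pow n) (by fun_prop)).aestronglyMeasurable
  · refine Filter.Eventually.of_forall fun v => ?_
    have : ‖v ^ n * Real.exp (-v ^ 2 / 2)‖ = |v| ^ n * Real.exp (-v ^ 2 / 2) := by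
      rw [norm_mul, norm_pow, Real.norm_eq_abs, Real.norm_eq_abs,
        abs_of_pos (Real.exp_pos _)]
    rw [this]
    have := gauss_pt_le hn v
    have he : -(v ^ 2 / 4) = -(4⁻¹:ℝ) * v ^ 2 := by ring
    rw [he] at this
    exact this

private lemma moment0 : ∫ v : ℝ, Real.exp (-v ^ 2 / 2) = Real.sqrt (2 * π) := by
  have h : (fun v : ℝ => Real.exp (-v ^ 2 / 2)) = fun v => Real.exp (-(1/2:ℝ) * v ^ 2) := by
    funext v; congr 1; ring
  rw [h, integral_gaussian]
  rw [show π / (1/2:ℝ) = 2 * π by ring]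

private lemma odd_vanish {n : ℕ} (hodd : Odd n) (hn : n ≤ 6) :
    ∫ v : ℝ, v ^ n * Real.exp (-v ^ 2 / 2) = 0 := by
  have h := integral_neg_eq_self (fun v : ℝ => v ^ n * Real.exp (-v ^ 2 / 2)) volume
  simp only [hodd.neg_pow, neg_sq, neg_mul] at h
  rw [integral_neg] at h
  linarith

private lemma tendsto_exp_quarter_atTop :
    Tendsto (fun v : ℝ => Real.exp (-(v ^ 2 / 4))) atTop (nhds 0) := by
  apply Real.tendsto_exp_atBot.comp
  apply tendsto_neg_atTop_atBot.comp
  exact (tendsto_pow_atTop two_ne_zero).atTop_div_const (by norm_num)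

private lemma tendsto_exp_quarter_atBot :
    Tendsto (fun v : ℝ => Real.exp (-(v ^ 2 / 4))) atBot (nhds 0) := by
  apply Real.tendsto_exp_atBot.comp
  apply tendsto_neg_atTop_atBot.comp
  apply Tendsto.atTop_div_const (by norm_num)
  have : (fun v : ℝ => v ^ 2) = fun v : ℝ => |v| ^ 2 := by funext v; rw [_root_.sq_abs]
  rw [this]
  exact (tendsto_pow_atTop two_ne_zero).comp tendsto_abs_atBot_atTop

private lemma moment2 : ∫ v : ℝ, v ^ 2 * Real.exp (-v ^ 2 / 2) = Real.sqrt (2 * π) := by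
  have hF : ∀ v : ℝ, HasDerivAt (fun v : ℝ => -v * Real.exp (-v ^ 2 / 2))
      ((v ^ 2 - 1) * Real.exp (-v ^ 2 / 2)) v := by
    intro v
    have h1 : HasDerivAt (fun v : ℝ => -v) (-1) v := (hasDerivAt_id v).neg
    have h2 : HasDerivAt (fun v : ℝ => Real.exp (-v ^ 2 / 2))
        (Real.exp (-v ^ 2 / 2) * (-v)) v := by
      have hin : HasDerivAt (fun v : ℝ => -v ^ 2 / 2) (-v) v := by
        have := ((hasDerivAt_pow 2 v).neg).div_const 2
        simpa using this.congr_deriv (by ring)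
      exact hin.exp
    have : HasDerivAt (fun v : ℝ => -v * Real.exp (-v ^ 2 / 2)) _ v := h1.mul h2
    convert this using 1; ring
  have hint : Integrable (fun v : ℝ => (v ^ 2 - 1) * Real.exp (-v ^ 2 / 2)) := by
    have : (fun v : ℝ => (v ^ 2 - 1) * Real.exp (-v ^ 2 / 2))
        = fun v => v ^ 2 * Real.exp (-v ^ 2 / 2) - v ^ 0 * Real.exp (-v ^ 2 / 2) := by
      funext v; ring
    rw [this]
    exact (integrable_poly_gauss (by norm_num)).sub (integrable_poly_gauss (by norm_num))
  have hTop : Tendsto (fun v : ℝ => -v * Real.exp (-v ^ 2 / 2)) atTop (nhds 0) := by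
    refine squeeze_zero_norm (a := fun v => 1729 * Real.exp (-(v ^ 2 / 4))) ?_ ?_
    · intro v
      have : ‖-v * Real.exp (-v ^ 2 / 2)‖ = |v| ^ 1 * Real.exp (-v ^ 2 / 2) := by
        rw [norm_mul, norm_neg, Real.norm_eq_abs, Real.norm_eq_abs,
          abs_of_pos (Real.exp_pos _), pow_one]
      rw [this]; exact gauss_pt_le (by norm_num) v
    · simpa using tendsto_exp_quarter_atTop.const_mul (1729:ℝ)
  have hBot : Tendsto (fun v : ℝ => -v * Real.exp (-v ^ 2 / 2)) atBot (nhds 0) := by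
    refine squeeze_zero_norm (a := fun v => 1729 * Real.exp (-(v ^ 2 / 4))) ?_ ?_
    · intro v
      have : ‖-v * Real.exp (-v ^ 2 / 2)‖ = |v| ^ 1 * Real.exp (-v ^ 2 / 2) := by
        rw [norm_mul, norm_neg, Real.norm_eq_abs, Real.norm_eq_abs,
          abs_of_pos (Real.exp_pos _), pow_one]
      rw [this]; exact gauss_pt_le (by norm_num) v
    · simpa using tendsto_exp_quarter_atBot.const_mul (1729:ℝ)
  have hIoi : ∫ v in Set.Ioi (0:ℝ), (v ^ 2 - 1) * Real.exp (-v ^ 2 / 2) = 0 := by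
    have := integral_Ioi_of_hasDerivAt_of_tendsto
      (f := fun v : ℝ => -v * Real.exp (-v ^ 2 / 2))
      (f' := fun v => (v ^ 2 - 1) * Real.exp (-v ^ 2 / 2)) (a := 0) (m := 0)
      (hF 0).continuousAt.continuousWithinAt (fun x _ => hF x) hint.integrableOn hTop
    simpa using this
  have hIic : ∫ v in Set.Iic (0:ℝ), (v ^ 2 - 1) * Real.exp (-v ^ 2 / 2) = 0 := by
    have := integral_Iic_of_hasDerivAt_of_tendsto
      (f := fun v : ℝ => -v * Real.exp (-v ^ 2 / 2))
      (f' := fun v => (v ^ 2 - 1) * Real.exp (-v ^ 2 / 2)) (a := 0) (m := 0)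
      (hF 0).continuousAt.continuousWithinAt (fun x _ => hF x) hint.integrableOn hBot
    simpa using this
  have hsplit : ∫ v : ℝ, (v ^ 2 - 1) * Real.exp (-v ^ 2 / 2) = 0 := by
    rw [← integral_add_compl measurableSet_Iic hint, Set.compl_Iic, hIic, hIoi, add_zero]
  have h2 : ∫ v : ℝ, ((v:ℝ) ^ 2 * Real.exp (-v ^ 2 / 2) - Real.exp (-v ^ 2 / 2)) = 0 := by
    rw [← hsplit]; congr 1; funext v; ring
  have h0 : Integrable (fun v : ℝ => Real.exp (-v ^ 2 / 2)) := by
    simpa using integrable_poly_gauss (n := 0) (by norm_num)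
  rw [integral_sub (integrable_poly_gauss (by norm_num)) h0] at h2
  rw [moment0] at h2
  linarith

/-- The plasma dispersion function. -/
noncomputable def plasmaZ (ζ : ℂ) : ℂ :=
  ((Real.sqrt (2 * π) : ℂ))⁻¹ * ∫ v : ℝ, Complex.exp (-(v:ℂ)^2 / 2) / ((v:ℂ) - ζ)

private lemma ofReal_form (n : ℕ) (v : ℝ) :
    (v:ℂ) ^ n * Complex.exp (-(v:ℂ) ^ 2 / 2) = ((v ^ n * Real.exp (-v ^ 2 / 2) : ℝ) : ℂ) := by
  push_cast [Complex.ofReal_exp]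
  ring

private lemma integrable_poly_gaussC {n : ℕ} (hn : n ≤ 6) :
    Integrable (fun v : ℝ => (v:ℂ) ^ n * Complex.exp (-(v:ℂ) ^ 2 / 2)) := by
  simp only [ofReal_form]
  exact (integrable_poly_gauss hn).ofReal

private lemma momentC (n : ℕ) :
    ∫ v : ℝ, (v:ℂ) ^ n * Complex.exp (-(v:ℂ) ^ 2 / 2)
      = ((∫ v : ℝ, v ^ n * Real.exp (-v ^ 2 / 2) : ℝ) : ℂ) := by
  simp only [ofReal_form]
  exact integral_ofReal

private lemma sub_ne {ζ : ℂ} (him : 0 < ζ.im) (v : ℝ) : (v:ℂ) - ζ ≠ 0 := by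
  intro h
  have := congrArg Complex.im h
  simp [Complex.sub_im, Complex.ofReal_im] at this
  linarith

private lemma abs_sub_ge_im {ζ : ℂ} (him : 0 < ζ.im) (v : ℝ) :
    ζ.im ≤ ‖(v:ℂ) - ζ‖ := by
  have h := Complex.abs_im_le_norm ((v:ℂ) - ζ)
  rw [Complex.sub_im, Complex.ofReal_im, zero_sub, abs_neg, abs_of_pos him] at h
  exact h

private lemma continuous_remainder (ζ : ℂ) (him : 0 < ζ.im) :
    Continuous (fun v : ℝ => (v:ℂ) ^ 4 * Complex.exp (-(v:ℂ) ^ 2 / 2) / ((v:ℂ) - ζ)) := by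
  apply Continuous.div (by fun_prop) (by fun_prop)
  exact fun v => sub_ne him v

private lemma norm_gC (n : ℕ) (v : ℝ) :
    ‖(v:ℂ) ^ n * Complex.exp (-(v:ℂ) ^ 2 / 2)‖ = |v| ^ n * Real.exp (-v ^ 2 / 2) := by
  rw [ofReal_form, Complex.norm_real, Real.norm_eq_abs, abs_mul, _root_.abs_pow,
    abs_of_pos (Real.exp_pos _)]

private lemma integrable_remainder (ζ : ℂ) (him : 0 < ζ.im) :
    Integrable (fun v : ℝ => (v:ℂ) ^ 4 * Complex.exp (-(v:ℂ) ^ 2 / 2) / ((v:ℂ) - ζ)) := by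
  apply Integrable.mono' (((integrable_poly_gauss (n := 4) (by norm_num)).abs).mul_const ζ.im⁻¹)
  · exact (continuous_remainder ζ him).aestronglyMeasurable
  · refine Filter.Eventually.of_forall fun v => ?_
    rw [norm_div, norm_gC]
    have h1 : 0 < ‖(v:ℂ) - ζ‖ := lt_of_lt_of_le him (abs_sub_ge_im him v)
    have hnum : (0:ℝ) ≤ |v| ^ 4 * Real.exp (-v ^ 2 / 2) := by positivity
    calc |v| ^ 4 * Real.exp (-v ^ 2 / 2) / ‖(v:ℂ) - ζ‖
        ≤ |v| ^ 4 * Real.exp (-v ^ 2 / 2) / ζ.im := by gcongr; exact abs_sub_ge_im him v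
      _ = |v ^ 4 * Real.exp (-v ^ 2 / 2)| * ζ.im⁻¹ := by
          rw [div_eq_mul_inv]; congr 1
          rw [abs_mul, _root_.abs_pow, abs_of_pos (Real.exp_pos _)]

private lemma plasmaZ_expand (ζ : ℂ) (him : 0 < ζ.im) :
    plasmaZ ζ = -ζ⁻¹ - ζ⁻¹ ^ 3 + ((Real.sqrt (2 * π) : ℂ))⁻¹ * ζ⁻¹ ^ 4 *
      ∫ v : ℝ, (v:ℂ) ^ 4 * Complex.exp (-(v:ℂ) ^ 2 / 2) / ((v:ℂ) - ζ) := by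
  have hζ : ζ ≠ 0 := by
    intro h; rw [h] at him; simp at him
  have hpt : ∀ v : ℝ, Complex.exp (-(v:ℂ) ^ 2 / 2) / ((v:ℂ) - ζ)
      = -ζ⁻¹ * ((v:ℂ) ^ 0 * Complex.exp (-(v:ℂ) ^ 2 / 2))
        + (-ζ⁻¹ ^ 2) * ((v:ℂ) ^ 1 * Complex.exp (-(v:ℂ) ^ 2 / 2))
        + (-ζ⁻¹ ^ 3) * ((v:ℂ) ^ 2 * Complex.exp (-(v:ℂ) ^ 2 / 2))
        + (-ζ⁻¹ ^ 4) * ((v:ℂ) ^ 3 * Complex.exp (-(v:ℂ) ^ 2 / 2))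
        + ζ⁻¹ ^ 4 * ((v:ℂ) ^ 4 * Complex.exp (-(v:ℂ) ^ 2 / 2) / ((v:ℂ) - ζ)) := by
    intro v
    have hv := sub_ne him v
    have ht : ((v:ℂ) - ζ) * ((v:ℂ) - ζ)⁻¹ = 1 := mul_inv_cancel₀ hv
    have hu : ζ * ζ⁻¹ = 1 := mul_inv_cancel₀ hζ
    linear_combination (norm := ring)
      (-(1 + ζ⁻¹*(v:ℂ) + (ζ⁻¹*(v:ℂ))^2 + (ζ⁻¹*(v:ℂ))^3) * Complex.exp (-(v:ℂ)^2/2)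
        * ((v:ℂ)-ζ)⁻¹) * hu
      + (-(1 + ζ⁻¹*(v:ℂ) + (ζ⁻¹*(v:ℂ))^2 + (ζ⁻¹*(v:ℂ))^3) * Complex.exp (-(v:ℂ)^2/2)
        * ζ⁻¹) * ht
  have i0 := integrable_poly_gaussC (n := 0) (by norm_num)
  have i1 := integrable_poly_gaussC (n := 1) (by norm_num)
  have i2 := integrable_poly_gaussC (n := 2) (by norm_num)
  have i3 := integrable_poly_gaussC (n := 3) (by norm_num)
  have i4 := integrable_remainder ζ him
  have j0 : Integrable (fun v : ℝ => -ζ⁻¹ * ((v:ℂ) ^ 0 * Complex.exp (-(v:ℂ) ^ 2 / 2))) volume :=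
    i0.const_mul _
  have j1 : Integrable (fun v : ℝ => -ζ⁻¹ * ((v:ℂ) ^ 0 * Complex.exp (-(v:ℂ) ^ 2 / 2))
      + (-ζ⁻¹ ^ 2) * ((v:ℂ) ^ 1 * Complex.exp (-(v:ℂ) ^ 2 / 2))) volume :=
    j0.add (i1.const_mul _)
  have j2 : Integrable (fun v : ℝ => -ζ⁻¹ * ((v:ℂ) ^ 0 * Complex.exp (-(v:ℂ) ^ 2 / 2))
      + (-ζ⁻¹ ^ 2) * ((v:ℂ) ^ 1 * Complex.exp (-(v:ℂ) ^ 2 / 2))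
      + (-ζ⁻¹ ^ 3) * ((v:ℂ) ^ 2 * Complex.exp (-(v:ℂ) ^ 2 / 2))) volume :=
    j1.add (i2.const_mul _)
  have j3 : Integrable (fun v : ℝ => -ζ⁻¹ * ((v:ℂ) ^ 0 * Complex.exp (-(v:ℂ) ^ 2 / 2))
      + (-ζ⁻¹ ^ 2) * ((v:ℂ) ^ 1 * Complex.exp (-(v:ℂ) ^ 2 / 2))
      + (-ζ⁻¹ ^ 3) * ((v:ℂ) ^ 2 * Complex.exp (-(v:ℂ) ^ 2 / 2))
      + (-ζ⁻¹ ^ 4) * ((v:ℂ) ^ 3 * Complex.exp (-(v:ℂ) ^ 2 / 2))) volume :=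
    j2.add (i3.const_mul _)
  rw [plasmaZ]
  simp only [hpt]
  rw [integral_add j3 (i4.const_mul _), integral_add j2 (i3.const_mul _),
      integral_add j1 (i2.const_mul _), integral_add j0 (i1.const_mul _),
      integral_const_mul, integral_const_mul, integral_const_mul, integral_const_mul,
      integral_const_mul, momentC, momentC, momentC, momentC]
  rw [show (∫ v : ℝ, v ^ 0 * Real.exp (-v ^ 2 / 2)) = Real.sqrt (2*π) from by
        simpa using moment0,
      show (∫ v : ℝ, v ^ 1 * Real.exp (-v ^ 2 / 2)) = 0 from
        odd_vanish (by norm_num) (by norm_num),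
      moment2, odd_vanish (n := 3) (by decide) (by norm_num)]
  have hs : ((Real.sqrt (2 * π) : ℝ) : ℂ) ≠ 0 := by
    have : 0 < Real.sqrt (2 * π) := Real.sqrt_pos.mpr (by positivity)
    exact_mod_cast ne_of_gt this
  have hS : ((Real.sqrt (2 * π) : ℝ) : ℂ) * ((Real.sqrt (2 * π) : ℝ) : ℂ)⁻¹ = 1 :=
    mul_inv_cancel₀ hs
  push_cast
  linear_combination (norm := ring) (-(ζ⁻¹ + ζ⁻¹ ^ 3)) * hS

private lemma exp_scal {c A : ℝ} (hc : 0 < c) (hA : 0 < A) :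
    A * Real.exp (-(c * A ^ 2)) ≤ (1 / c) / A := by
  have h1 : c * A ^ 2 ≤ Real.exp (c * A ^ 2) := by
    have := Real.add_one_le_exp (c * A ^ 2); linarith
  have h2 : 0 < c * A ^ 2 := by positivity
  rw [Real.exp_neg, ← div_eq_mul_inv]
  calc A / Real.exp (c * A ^ 2) ≤ A / (c * A ^ 2) := by gcongr
    _ = (1 / c) / A := by field_simp

private lemma norm_log_le {z : ℂ} (h1 : 1 ≤ ‖z‖) :
    ‖Complex.log z‖ ≤ Real.log (‖z‖) + π := by
  calc ‖Complex.log z‖ ≤ |(Complex.log z).re| + |(Complex.log z).im| :=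
        Complex.norm_le_abs_re_add_abs_im _
    _ ≤ Real.log (‖z‖) + π := by
        rw [Complex.log_re, Complex.log_im]
        have := Complex.abs_arg_le_pi z
        have hl : 0 ≤ Real.log (‖z‖) := Real.log_nonneg h1
        rw [_root_.abs_of_nonneg hl]
        linarith

private lemma hasDerivAt_g (t : ℝ) :
    HasDerivAt (fun t : ℝ => t ^ 4 * Real.exp (-t ^ 2 / 2))
      ((4 * t ^ 3 - t ^ 5) * Real.exp (-t ^ 2 / 2)) t := by
  have h1 : HasDerivAt (fun t : ℝ => t ^ 4) (4 * t ^ 3) t := by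
    simpa using hasDerivAt_pow 4 t
  have hin : HasDerivAt (fun t : ℝ => -t ^ 2 / 2) (-t) t := by
    have := ((hasDerivAt_pow 2 t).neg).div_const 2
    simpa using this.congr_deriv (by ring)
  have h2 := hin.exp
  have : HasDerivAt (fun t : ℝ => t ^ 4 * Real.exp (-t ^ 2 / 2)) _ t := h1.mul h2
  convert this using 1; ring

set_option maxHeartbeats 1000000 in
private lemma remainder_bound {s : ℝ} (hs : 0 < s) (hs1 : s ≤ 1) :
    ∃ C : ℝ, 0 < C ∧ ∀ ζ : ℂ, 0 < ζ.im → s * ‖ζ‖ ≤ ζ.re → 2 ≤ ζ.re →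
      π ≤ ‖ζ‖ →
      ‖∫ v : ℝ, (v:ℂ) ^ 4 * Complex.exp (-(v:ℂ) ^ 2 / 2) / ((v:ℂ) - ζ)‖
        ≤ C / ‖ζ‖ := by
  set K : ℝ := ∫ v : ℝ, v ^ 4 * Real.exp (-v ^ 2 / 2) with hK
  have hK0 : 0 ≤ K := integral_nonneg fun v => by positivity
  refine ⟨(2 * K + 200000) / s ^ 2, by positivity, ?_⟩
  intro ζ him hcone hx2 hπA
  set x : ℝ := ζ.re with hxdef
  set A : ℝ := ‖ζ‖ with hAdef
  have hA0 : 0 < A := lt_of_lt_of_le Real.pi_pos hπA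
  have hxA : x ≤ A := Complex.re_le_norm ζ
  have hx0 : 0 < x := lt_of_lt_of_le two_pos hx2
  have hx1 : (1:ℝ) ≤ x / 2 := by linarith
  have hsA : s * A ≤ x := hcone
  set h : ℝ → ℂ := fun v => (v:ℂ) ^ 4 * Complex.exp (-(v:ℂ) ^ 2 / 2) / ((v:ℂ) - ζ) with hh
  have hInt : Integrable h := integrable_remainder ζ him
  set B : Set ℝ := Set.Ioc (x / 2) (3 * x / 2) with hB
  -- part over Bᶜ
  have habs_low : ∀ v : ℝ, v ∈ Bᶜ → x / 2 ≤ ‖(v:ℂ) - ζ‖ := by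
    intro v hv
    have hre : |v - x| ≥ x / 2 := by
      simp only [hB, Set.mem_compl_iff, Set.mem_Ioc, not_and_or, not_lt, not_le] at hv
      rcases hv with hv | hv
      · rw [_root_.abs_sub_comm, _root_.abs_of_nonneg (by linarith)]; linarith
      · rw [_root_.abs_of_nonneg (by linarith)]; linarith
    calc x / 2 ≤ |v - x| := hre
      _ = |((v:ℂ) - ζ).re| := by rw [Complex.sub_re, Complex.ofReal_re]
      _ ≤ ‖(v:ℂ) - ζ‖ := Complex.abs_re_le_norm _
  have hnormh : ∀ v : ℝ, ‖h v‖ = v ^ 4 * Real.exp (-v ^ 2 / 2) / ‖(v:ℂ) - ζ‖ := by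
    intro v
    rw [hh, norm_div, norm_gC]
    congr 2
    rw [← _root_.abs_pow]; exact _root_.abs_of_nonneg (by positivity)
  have hIg : Integrable (fun v : ℝ => v ^ 4 * Real.exp (-v ^ 2 / 2)) :=
    integrable_poly_gauss (by norm_num)
  have hpart1 : ‖∫ v in Bᶜ, h v‖ ≤ (2 * K / s) / A := by
    have hb1 : ‖∫ v in Bᶜ, h v‖ ≤ ∫ v in Bᶜ, ‖h v‖ := norm_integral_le_integral_norm _
    have hb2 : ∫ v in Bᶜ, ‖h v‖ ≤ ∫ v in Bᶜ, (2 / x) * (v ^ 4 * Real.exp (-v ^ 2 / 2)) := by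
      apply setIntegral_mono_on hInt.norm.integrableOn
        ((hIg.const_mul (2 / x)).integrableOn) (measurableSet_Ioc.compl)
      intro v hv
      rw [hnormh v]
      have hd := habs_low v hv
      have hd0 : 0 < ‖(v:ℂ) - ζ‖ := lt_of_lt_of_le (by linarith) hd
      calc v ^ 4 * Real.exp (-v ^ 2 / 2) / ‖(v:ℂ) - ζ‖
          ≤ v ^ 4 * Real.exp (-v ^ 2 / 2) / (x / 2) :=
            div_le_div_of_nonneg_left (by positivity) (by linarith) hd
        _ = (2 / x) * (v ^ 4 * Real.exp (-v ^ 2 / 2)) := by field_simp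
    have hb3 : ∫ v in Bᶜ, (2 / x) * (v ^ 4 * Real.exp (-v ^ 2 / 2))
        ≤ ∫ v : ℝ, (2 / x) * (v ^ 4 * Real.exp (-v ^ 2 / 2)) := by
      apply setIntegral_le_integral (hIg.const_mul (2 / x))
      exact Filter.Eventually.of_forall fun v => by positivity
    have hb4 : ∫ v : ℝ, (2 / x) * (v ^ 4 * Real.exp (-v ^ 2 / 2)) = (2 / x) * K := by
      rw [integral_const_mul]
    have hb5 : (2 / x) * K ≤ (2 / (s * A)) * K := by
      apply mul_le_mul_of_nonneg_right _ hK0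
      exact div_le_div_of_nonneg_left (by norm_num) (by positivity) hsA
    calc ‖∫ v in Bᶜ, h v‖ ≤ ∫ v in Bᶜ, ‖h v‖ := hb1
      _ ≤ ∫ v in Bᶜ, (2 / x) * (v ^ 4 * Real.exp (-v ^ 2 / 2)) := hb2
      _ ≤ ∫ v : ℝ, (2 / x) * (v ^ 4 * Real.exp (-v ^ 2 / 2)) := hb3
      _ = (2 / x) * K := hb4
      _ ≤ (2 / (s * A)) * K := hb5
      _ = (2 * K / s) / A := by field_simp; try ring
  -- part over B
  have hne : ∀ v : ℝ, (v:ℂ) - ζ ≠ 0 := sub_ne him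
  have hcont_inv : Continuous fun v : ℝ => ((v:ℂ) - ζ)⁻¹ := by
    apply Continuous.inv₀ (by fun_prop) hne
  have hcont_gC : Continuous fun v : ℝ => (v:ℂ) ^ 4 * Complex.exp (-(v:ℂ) ^ 2 / 2) := by
    fun_prop
  have hab : x / 2 ≤ 3 * x / 2 := by linarith
  set w0 : ℂ := (x:ℂ) ^ 4 * Complex.exp (-(x:ℂ) ^ 2 / 2) with hw0
  have hsplit_pt : ∀ v : ℝ, h v
      = ((v:ℂ) ^ 4 * Complex.exp (-(v:ℂ) ^ 2 / 2) - w0) / ((v:ℂ) - ζ) + w0 * ((v:ℂ) - ζ)⁻¹ := by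
    intro v; rw [hh, hw0]; ring
  have hii1 : IntervalIntegrable
      (fun v : ℝ => ((v:ℂ) ^ 4 * Complex.exp (-(v:ℂ) ^ 2 / 2) - w0) / ((v:ℂ) - ζ))
      volume (x / 2) (3 * x / 2) :=
    (Continuous.div (hcont_gC.sub continuous_const) (by fun_prop) hne).intervalIntegrable _ _
  have hii2 : IntervalIntegrable (fun v : ℝ => w0 * ((v:ℂ) - ζ)⁻¹)
      volume (x / 2) (3 * x / 2) := (continuous_const.mul hcont_inv).intervalIntegrable _ _
  -- J1 bound
  have hLbound : ∀ t ∈ Set.Icc (x / 2) (3 * x / 2),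
      ‖(4 * t ^ 3 - t ^ 5) * Real.exp (-t ^ 2 / 2)‖ ≤ 8645 * Real.exp (-(x ^ 2 / 16)) := by
    intro t ht
    obtain ⟨ht1, ht2⟩ := ht
    have ht0 : 0 < t := lt_of_lt_of_le (by linarith) ht1
    have hq : t ^ 2 / 4 ≥ x ^ 2 / 16 := by nlinarith
    have hw3 := weight_le (n := 3) (by norm_num) t
    have hw5 := weight_le (n := 5) (by norm_num) t
    have habs : |4 * t ^ 3 - t ^ 5| ≤ 4 * |t| ^ 3 + |t| ^ 5 := by
      calc |4 * t ^ 3 - t ^ 5| ≤ |4 * t ^ 3| + |t ^ 5| := abs_sub _ _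
        _ = 4 * |t| ^ 3 + |t| ^ 5 := by
            rw [abs_mul, _root_.abs_pow, _root_.abs_pow]; norm_num
    rw [norm_mul, Real.norm_eq_abs, Real.norm_eq_abs, _root_.abs_of_pos (Real.exp_pos _)]
    have hstep : |4 * t ^ 3 - t ^ 5| * Real.exp (-t ^ 2 / 2)
        ≤ 8645 * Real.exp (t ^ 2 / 4) * Real.exp (-t ^ 2 / 2) := by
      apply mul_le_mul_of_nonneg_right _ (Real.exp_nonneg _)
      calc |4 * t ^ 3 - t ^ 5| ≤ 4 * |t| ^ 3 + |t| ^ 5 := habs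
        _ ≤ 4 * (1729 * Real.exp (t ^ 2 / 4)) + 1729 * Real.exp (t ^ 2 / 4) := by linarith
        _ = 8645 * Real.exp (t ^ 2 / 4) := by ring
    calc |4 * t ^ 3 - t ^ 5| * Real.exp (-t ^ 2 / 2)
        ≤ 8645 * Real.exp (t ^ 2 / 4) * Real.exp (-t ^ 2 / 2) := hstep
      _ = 8645 * Real.exp (-(t ^ 2 / 4)) := by rw [mul_assoc, ← Real.exp_add]; congr 2; ring
      _ ≤ 8645 * Real.exp (-(x ^ 2 / 16)) := by
          apply mul_le_mul_of_nonneg_left _ (by norm_num)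
          exact Real.exp_le_exp.mpr (by linarith)
  have hgdiff : ∀ v ∈ Set.Ioc (x / 2) (3 * x / 2),
      ‖((v:ℂ) ^ 4 * Complex.exp (-(v:ℂ) ^ 2 / 2) - w0) / ((v:ℂ) - ζ)‖
        ≤ 8645 * Real.exp (-(x ^ 2 / 16)) := by
    intro v hv
    have hvI : v ∈ Set.Icc (x / 2) (3 * x / 2) := ⟨le_of_lt hv.1, hv.2⟩
    have hxI : x ∈ Set.Icc (x / 2) (3 * x / 2) := ⟨by linarith, by linarith⟩
    have hmvt := Convex.norm_image_sub_le_of_norm_hasDerivWithin_le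
      (f := fun t : ℝ => t ^ 4 * Real.exp (-t ^ 2 / 2))
      (f' := fun t => (4 * t ^ 3 - t ^ 5) * Real.exp (-t ^ 2 / 2))
      (fun t ht => (hasDerivAt_g t).hasDerivWithinAt) hLbound (convex_Icc _ _) hxI hvI
    have hnum : ‖(v:ℂ) ^ 4 * Complex.exp (-(v:ℂ) ^ 2 / 2) - w0‖
        = ‖(fun t : ℝ => t ^ 4 * Real.exp (-t ^ 2 / 2)) v
            - (fun t : ℝ => t ^ 4 * Real.exp (-t ^ 2 / 2)) x‖ := by
      rw [hw0, ofReal_form, ofReal_form, ← Complex.ofReal_sub, Complex.norm_real]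
    have hden : |v - x| ≤ ‖(v:ℂ) - ζ‖ := by
      calc |v - x| = |((v:ℂ) - ζ).re| := by rw [Complex.sub_re, Complex.ofReal_re]
        _ ≤ ‖(v:ℂ) - ζ‖ := Complex.abs_re_le_norm _
    have hd0 : 0 < ‖(v:ℂ) - ζ‖ := lt_of_lt_of_le him (abs_sub_ge_im him v)
    rw [norm_div, hnum]
    rw [div_le_iff₀ hd0]
    calc ‖(fun t : ℝ => t ^ 4 * Real.exp (-t ^ 2 / 2)) v
          - (fun t : ℝ => t ^ 4 * Real.exp (-t ^ 2 / 2)) x‖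
        ≤ (8645 * Real.exp (-(x ^ 2 / 16))) * ‖v - x‖ := hmvt
      _ ≤ (8645 * Real.exp (-(x ^ 2 / 16))) * ‖(v:ℂ) - ζ‖ := by
          apply mul_le_mul_of_nonneg_left _ (by positivity)
          rw [Real.norm_eq_abs]; exact hden
  have hJ1 : ‖∫ v in (x/2)..(3*x/2),
      ((v:ℂ) ^ 4 * Complex.exp (-(v:ℂ) ^ 2 / 2) - w0) / ((v:ℂ) - ζ)‖
        ≤ 8645 * Real.exp (-(x ^ 2 / 16)) * x := by
    have := intervalIntegral.norm_integral_le_of_norm_le_const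
      (C := 8645 * Real.exp (-(x ^ 2 / 16)))
      (f := fun v : ℝ => ((v:ℂ) ^ 4 * Complex.exp (-(v:ℂ) ^ 2 / 2) - w0) / ((v:ℂ) - ζ))
      (a := x/2) (b := 3*x/2) ?_
    · calc ‖∫ v in (x/2)..(3*x/2),
          ((v:ℂ) ^ 4 * Complex.exp (-(v:ℂ) ^ 2 / 2) - w0) / ((v:ℂ) - ζ)‖
          ≤ 8645 * Real.exp (-(x ^ 2 / 16)) * |3*x/2 - x/2| := this
        _ = 8645 * Real.exp (-(x ^ 2 / 16)) * x := by
            congr 1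
            rw [show 3*x/2 - x/2 = x by ring, _root_.abs_of_pos hx0]
    · intro v hv
      rw [Set.uIoc_of_le hab] at hv
      exact hgdiff v hv
  -- J2 : FTC for log
  have hlogderiv : ∀ t ∈ Set.uIcc (x/2) (3*x/2),
      HasDerivAt (fun t : ℝ => Complex.log ((t:ℂ) - ζ)) (((t:ℂ) - ζ)⁻¹) t := by
    intro t _
    have hsl : ((t:ℂ) - ζ) ∈ Complex.slitPlane := by
      apply Or.inr
      simp only [Complex.sub_im, Complex.ofReal_im, zero_sub]
      exact neg_ne_zero.mpr (ne_of_gt him)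
    have h1 : HasDerivAt (fun z : ℂ => Complex.log (z - ζ)) (((t:ℂ) - ζ)⁻¹) ((t:ℂ)) := by
      have := (Complex.hasDerivAt_log hsl).comp ((t:ℂ)) ((hasDerivAt_id ((t:ℂ))).sub_const ζ)
      rw [mul_one] at this; exact this
    exact h1.comp_ofReal
  have hFTC : (∫ v in (x/2)..(3*x/2), ((v:ℂ) - ζ)⁻¹)
      = Complex.log (((3*x/2 : ℝ):ℂ) - ζ) - Complex.log (((x/2 : ℝ):ℂ) - ζ) :=
    intervalIntegral.integral_eq_sub_of_hasDerivAt hlogderiv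
      (hcont_inv.intervalIntegrable _ _)
  have hlog_a : ‖Complex.log (((x/2 : ℝ):ℂ) - ζ)‖ ≤ 4 * A := by
    have hre : |(((x/2 : ℝ):ℂ) - ζ).re| = x / 2 := by
      rw [Complex.sub_re, Complex.ofReal_re]
      rw [show x/2 - x = -(x/2) by ring, _root_.abs_neg, _root_.abs_of_pos (by linarith)]
    have h1 : (1:ℝ) ≤ ‖((x/2 : ℝ):ℂ) - ζ‖ := by
      calc (1:ℝ) ≤ x/2 := hx1
        _ = |(((x/2 : ℝ):ℂ) - ζ).re| := hre.symm
        _ ≤ ‖_‖ := Complex.abs_re_le_norm _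
    have h2 : ‖((x/2 : ℝ):ℂ) - ζ‖ ≤ 2 * A := by
      calc ‖((x/2 : ℝ):ℂ) - ζ‖ = ‖((x/2 : ℝ):ℂ) - ζ‖ := rfl
        _ ≤ ‖((x/2 : ℝ):ℂ)‖ + ‖ζ‖ := norm_sub_le _ _
        _ = x/2 + A := by
            rw [Complex.norm_real, Real.norm_eq_abs, _root_.abs_of_pos (by linarith)]
        _ ≤ 2 * A := by linarith
    calc ‖Complex.log (((x/2 : ℝ):ℂ) - ζ)‖
        ≤ Real.log (‖((x/2 : ℝ):ℂ) - ζ‖) + π := norm_log_le h1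
      _ ≤ (2 * A - 1) + π := by
          have := Real.log_le_sub_one_of_pos (lt_of_lt_of_le one_pos h1)
          have h3 : Real.log (‖((x/2 : ℝ):ℂ) - ζ‖)
              ≤ ‖((x/2 : ℝ):ℂ) - ζ‖ - 1 := this
          linarith
      _ ≤ 4 * A := by linarith
  have hlog_b : ‖Complex.log (((3*x/2 : ℝ):ℂ) - ζ)‖ ≤ 4 * A := by
    have hre : |(((3*x/2 : ℝ):ℂ) - ζ).re| = x / 2 := by
      rw [Complex.sub_re, Complex.ofReal_re]
      rw [show 3*x/2 - x = x/2 by ring, _root_.abs_of_pos (by linarith)]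
    have h1 : (1:ℝ) ≤ ‖((3*x/2 : ℝ):ℂ) - ζ‖ := by
      calc (1:ℝ) ≤ x/2 := hx1
        _ = |(((3*x/2 : ℝ):ℂ) - ζ).re| := hre.symm
        _ ≤ ‖_‖ := Complex.abs_re_le_norm _
    have h2 : ‖((3*x/2 : ℝ):ℂ) - ζ‖ ≤ 3 * A := by
      calc ‖((3*x/2 : ℝ):ℂ) - ζ‖ = ‖((3*x/2 : ℝ):ℂ) - ζ‖ := rfl
        _ ≤ ‖((3*x/2 : ℝ):ℂ)‖ + ‖ζ‖ := norm_sub_le _ _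
        _ = 3*x/2 + A := by
            rw [Complex.norm_real, Real.norm_eq_abs, _root_.abs_of_pos (by linarith)]
        _ ≤ 3 * A := by linarith
    calc ‖Complex.log (((3*x/2 : ℝ):ℂ) - ζ)‖
        ≤ Real.log (‖((3*x/2 : ℝ):ℂ) - ζ‖) + π := norm_log_le h1
      _ ≤ (3 * A - 1) + π := by
          have := Real.log_le_sub_one_of_pos (lt_of_lt_of_le one_pos h1)
          linarith
      _ ≤ 4 * A := by linarith
  have hw0norm : ‖w0‖ ≤ 1729 * Real.exp (-(x ^ 2 / 4)) := by
    rw [hw0, norm_gC]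
    have := gauss_pt_le (n := 4) (by norm_num) x
    exact this
  have hJ2 : ‖∫ v in (x/2)..(3*x/2), w0 * ((v:ℂ) - ζ)⁻¹‖
      ≤ 1729 * Real.exp (-(x ^ 2 / 4)) * (8 * A) := by
    rw [intervalIntegral.integral_const_mul, hFTC, norm_mul]
    have hdiff : ‖Complex.log (((3*x/2 : ℝ):ℂ) - ζ) - Complex.log (((x/2 : ℝ):ℂ) - ζ)‖
        ≤ 8 * A := by
      calc ‖Complex.log (((3*x/2 : ℝ):ℂ) - ζ) - Complex.log (((x/2 : ℝ):ℂ) - ζ)‖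
          ≤ ‖Complex.log (((3*x/2 : ℝ):ℂ) - ζ)‖ + ‖Complex.log (((x/2 : ℝ):ℂ) - ζ)‖ :=
            norm_sub_le _ _
        _ ≤ 4 * A + 4 * A := add_le_add hlog_b hlog_a
        _ = 8 * A := by ring
    exact mul_le_mul hw0norm hdiff (norm_nonneg _) (by positivity)
  -- combine B part
  have hpartB : ‖∫ v in B, h v‖
      ≤ 8645 * Real.exp (-(x ^ 2 / 16)) * x + 1729 * Real.exp (-(x ^ 2 / 4)) * (8 * A) := by
    have hBI : ∫ v in B, h v = ∫ v in (x/2)..(3*x/2), h v := by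
      rw [intervalIntegral.integral_of_le hab]
    rw [hBI]
    have hsum : (∫ v in (x/2)..(3*x/2), h v)
        = (∫ v in (x/2)..(3*x/2),
            ((v:ℂ) ^ 4 * Complex.exp (-(v:ℂ) ^ 2 / 2) - w0) / ((v:ℂ) - ζ))
          + ∫ v in (x/2)..(3*x/2), w0 * ((v:ℂ) - ζ)⁻¹ := by
      rw [← intervalIntegral.integral_add hii1 hii2]
      apply intervalIntegral.integral_congr
      intro v _
      exact hsplit_pt v
    rw [hsum]
    calc ‖_ + _‖ ≤ _ + _ := norm_add_le _ _
      _ ≤ 8645 * Real.exp (-(x ^ 2 / 16)) * x + 1729 * Real.exp (-(x ^ 2 / 4)) * (8 * A) :=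
        add_le_add hJ1 hJ2
  -- final combination
  have hsplit : (∫ v : ℝ, h v) = (∫ v in B, h v) + ∫ v in Bᶜ, h v :=
    (integral_add_compl measurableSet_Ioc hInt).symm
  have hxe : x * Real.exp (-(x ^ 2 / 16)) ≤ A * Real.exp (-((s^2/16) * A ^ 2)) := by
    apply mul_le_mul hxA _ (Real.exp_nonneg _) (le_of_lt hA0)
    apply Real.exp_le_exp.mpr
    have : (s * A) ^ 2 ≤ x ^ 2 := by
      apply sq_le_sq' _ hsA
      nlinarith
    nlinarith
  have hxe2 : Real.exp (-(x ^ 2 / 4)) ≤ Real.exp (-((s^2/4) * A ^ 2)) := by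
    apply Real.exp_le_exp.mpr
    have : (s * A) ^ 2 ≤ x ^ 2 := by
      apply sq_le_sq' _ hsA
      nlinarith
    nlinarith
  have hscal1 : A * Real.exp (-((s^2/16) * A ^ 2)) ≤ (16 / s^2) / A := by
    have := exp_scal (c := s^2/16) (by positivity) hA0
    calc A * Real.exp (-((s^2/16) * A ^ 2)) ≤ (1 / (s^2/16)) / A := this
      _ = (16 / s^2) / A := by rw [one_div_div]
  have hscal2 : A * Real.exp (-((s^2/4) * A ^ 2)) ≤ (4 / s^2) / A := by
    have := exp_scal (c := s^2/4) (by positivity) hA0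
    calc A * Real.exp (-((s^2/4) * A ^ 2)) ≤ (1 / (s^2/4)) / A := this
      _ = (4 / s^2) / A := by rw [one_div_div]
  have hterm1 : 8645 * Real.exp (-(x ^ 2 / 16)) * x ≤ 8645 * ((16 / s^2) / A) := by
    calc 8645 * Real.exp (-(x ^ 2 / 16)) * x = 8645 * (x * Real.exp (-(x ^ 2 / 16))) := by ring
      _ ≤ 8645 * (A * Real.exp (-((s^2/16) * A ^ 2))) := by
          apply mul_le_mul_of_nonneg_left hxe (by norm_num)
      _ ≤ 8645 * ((16 / s^2) / A) := by
          apply mul_le_mul_of_nonneg_left hscal1 (by norm_num)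
  have hterm2 : 1729 * Real.exp (-(x ^ 2 / 4)) * (8 * A) ≤ 13832 * ((4 / s^2) / A) := by
    calc 1729 * Real.exp (-(x ^ 2 / 4)) * (8 * A)
        = 13832 * (A * Real.exp (-(x ^ 2 / 4))) := by ring
      _ ≤ 13832 * (A * Real.exp (-((s^2/4) * A ^ 2))) := by
          apply mul_le_mul_of_nonneg_left _ (by norm_num)
          exact mul_le_mul_of_nonneg_left hxe2 (le_of_lt hA0)
      _ ≤ 13832 * ((4 / s^2) / A) := by
          apply mul_le_mul_of_nonneg_left hscal2 (by norm_num)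
  have hss : s ^ 2 ≤ s := by nlinarith
  have hterm0 : (2 * K / s) / A ≤ (2 * K / s^2) / A := by
    have h1s : 2 * K / s ≤ 2 * K / s ^ 2 := by
      rw [div_eq_mul_inv, div_eq_mul_inv, ← one_div, ← one_div]
      apply mul_le_mul_of_nonneg_left _ (by positivity)
      exact one_div_le_one_div_of_le (by positivity) hss
    exact div_le_div_of_nonneg_right h1s hA0.le
  calc ‖∫ v : ℝ, h v‖ = ‖(∫ v in B, h v) + ∫ v in Bᶜ, h v‖ := by rw [← hsplit]
    _ ≤ ‖∫ v in B, h v‖ + ‖∫ v in Bᶜ, h v‖ := norm_add_le _ _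
    _ ≤ (8645 * Real.exp (-(x ^ 2 / 16)) * x + 1729 * Real.exp (-(x ^ 2 / 4)) * (8 * A))
        + (2 * K / s) / A := add_le_add hpartB hpart1
    _ ≤ (8645 * ((16 / s^2) / A) + 13832 * ((4 / s^2) / A)) + (2 * K / s^2) / A := by
        refine add_le_add (add_le_add hterm1 hterm2) hterm0
    _ = ((8645 * 16 + 13832 * 4 + 2 * K) / s ^ 2) / A := by field_simp; try ring
    _ ≤ ((2 * K + 200000) / s ^ 2) / A := by
        have hnum : 8645 * 16 + 13832 * 4 + 2 * K ≤ 2 * K + 200000 := by linarith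
        have h1 : (8645 * 16 + 13832 * 4 + 2 * K) / s ^ 2 ≤ (2 * K + 200000) / s ^ 2 := by
          exact div_le_div_of_nonneg_right hnum (by positivity)
        exact div_le_div_of_nonneg_right h1 hA0.le

/-- The spectral function of the linearized BGK operator. -/
noncomputable def specGamma (τ k : ℝ) (ζ : ℂ) : ℂ :=
  (1/6) * (ζ + 6 * Complex.I * ((k*τ:ℝ):ℂ)^3 - ζ * (ζ^2 + 5) * ((k*τ:ℝ):ℂ)^2
    + 2 * Complex.I * (ζ^2 + 3) * ((k*τ:ℝ):ℂ)
    + plasmaZ ζ * (ζ^2 - (ζ^4 + 4*ζ^2 + 11) * ((k*τ:ℝ):ℂ)^2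
        + 2 * Complex.I * ζ^3 * ((k*τ:ℝ):ℂ) - 5)
    - 4 * Complex.I * (plasmaZ ζ)^2 * ((ζ^2 + 1) * ((k*τ:ℝ):ℂ) - Complex.I * ζ))

private noncomputable def Wfun (ζ : ℂ) : ℂ := (plasmaZ ζ + ζ⁻¹ + ζ⁻¹ ^ 3) * ζ ^ 5

private noncomputable def msum (u : ℂ) (l : List (ℂ × ℕ)) : ℂ :=
  (l.map (fun p => p.1 * u ^ p.2)).sum

private noncomputable def mbound (l : List (ℂ × ℕ)) : ℝ := (l.map (fun p => ‖p.1‖)).sum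

private lemma msum_le {u : ℂ} (hu : ‖u‖ ≤ 1) (l : List (ℂ × ℕ)) : ‖msum u l‖ ≤ mbound l := by
  induction l with
  | nil => simp [msum, mbound]
  | cons a t ih =>
    simp only [msum, mbound, List.map_cons, List.sum_cons] at *
    refine (norm_add_le _ _).trans (add_le_add ?_ ih)
    rw [norm_mul, norm_pow]
    exact mul_le_of_le_one_right (norm_nonneg _) (pow_le_one₀ (norm_nonneg u) hu)

private lemma mbound_nonneg (l : List (ℂ × ℕ)) : 0 ≤ mbound l := by
  induction l with
  | nil => simp [mbound]
  | cons a t ih =>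
    simp only [mbound, List.map_cons, List.sum_cons] at *
    positivity

private noncomputable def list0 (α β : ℂ) : List (ℂ × ℕ) :=
  [(-(2/3)*β, 5), ((-(2/3) : ℂ), 4), (-2*β, 3), ((-(1/2) : ℂ), 2), ((11/6)*α^2, 2),
   (-2*β, 1), ((5/2)*α^2, 0)]

private noncomputable def list1 (α β : ℂ) : List (ℂ × ℕ) :=
  [((4/3)*β, 7), (((4/3) : ℂ), 6), ((8/3)*β, 5), (((1/2) : ℂ), 4), (-(11/6)*α^2, 4),
   ((4/3)*β, 3), (((1/6) : ℂ), 2), (-(2/3)*α^2, 2), ((1/3)*β, 1), (-(1/6)*α^2, 0)]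

private noncomputable def list2 (α β : ℂ) : List (ℂ × ℕ) :=
  [(-(2/3)*β, 9), ((-(2/3) : ℂ), 8), (-(2/3)*β, 7)]

set_option maxHeartbeats 1000000 in
private lemma spec_identity (τ k : ℝ) (ζ : ℂ) (hζ : ζ ≠ 0) :
    specGamma τ k ζ - Complex.I * ((k*τ:ℝ):ℂ) ^ 3
      = ζ⁻¹ * (msum ζ⁻¹ (list0 ((k*τ:ℝ):ℂ) (Complex.I * ((k*τ:ℝ):ℂ)))
          + Wfun ζ * msum ζ⁻¹ (list1 ((k*τ:ℝ):ℂ) (Complex.I * ((k*τ:ℝ):ℂ)))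
          + (Wfun ζ) ^ 2 * msum ζ⁻¹ (list2 ((k*τ:ℝ):ℂ) (Complex.I * ((k*τ:ℝ):ℂ)))) := by
  set α : ℂ := ((k*τ:ℝ):ℂ) with hα
  have hspec : specGamma τ k ζ = (1/6) * (ζ + 6*(Complex.I*α)*α^2 - ζ*(ζ^2+5)*α^2
      + 2*(Complex.I*α)*(ζ^2+3)
      + plasmaZ ζ * (ζ^2 - (ζ^4+4*ζ^2+11)*α^2 + 2*(Complex.I*α)*ζ^3 - 5)
      - 4*(plasmaZ ζ)^2*((ζ^2+1)*(Complex.I*α) + ζ)) := by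
    rw [specGamma]
    linear_combination (norm := ring) (2/3 * plasmaZ ζ^2 * ζ) * Complex.I_sq
  have hu : ζ * ζ⁻¹ = 1 := mul_inv_cancel₀ hζ
  simp only [msum, list0, list1, list2, List.map_cons, List.map_nil, List.sum_cons,
    List.sum_nil, Wfun]
  rw [hspec]
  linear_combination (norm := ring) ((-1:ℂ)*α*Complex.I + (5/6:ℂ)*(plasmaZ ζ) + (11/6:ℂ)*(plasmaZ ζ)*α^2 + (2/3:ℂ)*(plasmaZ ζ)^2*α*Complex.I + (5/2:ℂ)*ζ⁻¹*α^2 + (-2:ℂ)*ζ⁻¹^2*α*Complex.I + (-1/2:ℂ)*ζ⁻¹^3 + (11/6:ℂ)*ζ⁻¹^3*α^2 + (-2:ℂ)*ζ⁻¹^4*α*Complex.I + (-2/3:ℂ)*ζ⁻¹^5 + (-2/3:ℂ)*ζ⁻¹^6*α*Complex.I + (-1/6:ℂ)*ζ + (5/6:ℂ)*ζ*α^2 + (2/3:ℂ)*ζ*(plasmaZ ζ)^2 + (-1:ℂ)*ζ*ζ⁻¹*α*Complex.I + (5/6:ℂ)*ζ*ζ⁻¹*(plasmaZ ζ) + (11/6:ℂ)*ζ*ζ⁻¹*(plasmaZ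 ζ)*α^2 + (2/3:ℂ)*ζ*ζ⁻¹*(plasmaZ ζ)^2*α*Complex.I + (5/2:ℂ)*ζ*ζ⁻¹^2*α^2 + (-2:ℂ)*ζ*ζ⁻¹^3*α*Complex.I + (-1/2:ℂ)*ζ*ζ⁻¹^4 + (11/6:ℂ)*ζ*ζ⁻¹^4*α^2 + (-2:ℂ)*ζ*ζ⁻¹^5*α*Complex.I + (-2/3:ℂ)*ζ*ζ⁻¹^6 + (-2/3:ℂ)*ζ*ζ⁻¹^7*α*Complex.I + (-1/3:ℂ)*ζ^2*α*Complex.I + (-1/6:ℂ)*ζ^2*(plasmaZ ζ) + (2/3:ℂ)*ζ^2*(plasmaZ ζ)*α^2 + (2/3:ℂ)*ζ^2*(plasmaZ ζ)^2*α*Complex.I + (-1/6:ℂ)*ζ^2*ζ⁻¹ + (5/6:ℂ)*ζ^2*ζ⁻¹*α^2 + (2/3:ℂ)*ζ^2*ζ⁻¹*(plasmaZ ζ)^2 + (-1:ℂ)*ζ^2*ζ⁻¹^2*α*Complex.I + (5/6:ℂ)*ζ^2*ζ⁻¹^2*(plasmaZ ζ) + (11/6:ℂ)*ζ^2*ζ⁻¹^2*(plasmaZ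 ζ)*α^2 + (2/3:ℂ)*ζ^2*ζ⁻¹^2*(plasmaZ ζ)^2*α*Complex.I + (5/2:ℂ)*ζ^2*ζ⁻¹^3*α^2 + (-2:ℂ)*ζ^2*ζ⁻¹^4*α*Complex.I + (-1/2:ℂ)*ζ^2*ζ⁻¹^5 + (11/6:ℂ)*ζ^2*ζ⁻¹^5*α^2 + (-2:ℂ)*ζ^2*ζ⁻¹^6*α*Complex.I + (-2/3:ℂ)*ζ^2*ζ⁻¹^7 + (-2/3:ℂ)*ζ^2*ζ⁻¹^8*α*Complex.I + (1/6:ℂ)*ζ^3*α^2 + (-1/3:ℂ)*ζ^3*(plasmaZ ζ)*α*Complex.I + (-1/3:ℂ)*ζ^3*ζ⁻¹*α*Complex.I + (-1/6:ℂ)*ζ^3*ζ⁻¹*(plasmaZ ζ) + (2/3:ℂ)*ζ^3*ζ⁻¹*(plasmaZ ζ)*α^2 + (2/3:ℂ)*ζ^3*ζ⁻¹*(plasmaZ ζ)^2*α*Complex.I + (-1/6:ℂ)*ζ^3*ζ⁻¹^2 + (5/6:ℂ)*ζ^3*ζ⁻¹^2*α^2 + (2/3:ℂ)*ζ^3*ζ⁻¹^2*(plasmaZ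 ζ)^2 + (-1:ℂ)*ζ^3*ζ⁻¹^3*α*Complex.I + (5/6:ℂ)*ζ^3*ζ⁻¹^3*(plasmaZ ζ) + (11/6:ℂ)*ζ^3*ζ⁻¹^3*(plasmaZ ζ)*α^2 + (2/3:ℂ)*ζ^3*ζ⁻¹^3*(plasmaZ ζ)^2*α*Complex.I + (5/2:ℂ)*ζ^3*ζ⁻¹^4*α^2 + (-2:ℂ)*ζ^3*ζ⁻¹^5*α*Complex.I + (-1/2:ℂ)*ζ^3*ζ⁻¹^6 + (11/6:ℂ)*ζ^3*ζ⁻¹^6*α^2 + (-2:ℂ)*ζ^3*ζ⁻¹^7*α*Complex.I + (-2/3:ℂ)*ζ^3*ζ⁻¹^8 + (-2/3:ℂ)*ζ^3*ζ⁻¹^9*α*Complex.I + (1/6:ℂ)*ζ^4*(plasmaZ ζ)*α^2 + (1/6:ℂ)*ζ^4*ζ⁻¹*α^2 + (-1/3:ℂ)*ζ^4*ζ⁻¹*(plasmaZ ζ)*α*Complex.I + (-1/3:ℂ)*ζ^4*ζ⁻¹^2*α*Complex.I + (-1/6:ℂ)*ζ^4*ζ⁻¹^2*(plasmaZ ζ)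 + (2/3:ℂ)*ζ^4*ζ⁻¹^2*(plasmaZ ζ)*α^2 + (2/3:ℂ)*ζ^4*ζ⁻¹^2*(plasmaZ ζ)^2*α*Complex.I + (-1/6:ℂ)*ζ^4*ζ⁻¹^3 + (5/6:ℂ)*ζ^4*ζ⁻¹^3*α^2 + (2/3:ℂ)*ζ^4*ζ⁻¹^3*(plasmaZ ζ)^2 + (-1:ℂ)*ζ^4*ζ⁻¹^4*α*Complex.I + (5/6:ℂ)*ζ^4*ζ⁻¹^4*(plasmaZ ζ) + (11/6:ℂ)*ζ^4*ζ⁻¹^4*(plasmaZ ζ)*α^2 + (2/3:ℂ)*ζ^4*ζ⁻¹^4*(plasmaZ ζ)^2*α*Complex.I + (5/2:ℂ)*ζ^4*ζ⁻¹^5*α^2 + (-2:ℂ)*ζ^4*ζ⁻¹^6*α*Complex.I + (-1/2:ℂ)*ζ^4*ζ⁻¹^7 + (11/6:ℂ)*ζ^4*ζ⁻¹^7*α^2 + (-2:ℂ)*ζ^4*ζ⁻¹^8*α*Complex.I + (-2/3:ℂ)*ζ^4*ζ⁻¹^9 + (-2/3:ℂ)*ζ^4*ζ⁻¹^10*α*Complex.I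 + (2/3:ℂ)*ζ^5*ζ⁻¹^3*(plasmaZ ζ)^2*α*Complex.I + (4/3:ℂ)*ζ^5*ζ⁻¹^4*(plasmaZ ζ)*α*Complex.I + (2/3:ℂ)*ζ^5*ζ⁻¹^4*(plasmaZ ζ)^2 + (2/3:ℂ)*ζ^5*ζ⁻¹^5*α*Complex.I + (4/3:ℂ)*ζ^5*ζ⁻¹^5*(plasmaZ ζ) + (2/3:ℂ)*ζ^5*ζ⁻¹^5*(plasmaZ ζ)^2*α*Complex.I + (2/3:ℂ)*ζ^5*ζ⁻¹^6 + (8/3:ℂ)*ζ^5*ζ⁻¹^6*(plasmaZ ζ)*α*Complex.I + (2:ℂ)*ζ^5*ζ⁻¹^7*α*Complex.I + (4/3:ℂ)*ζ^5*ζ⁻¹^7*(plasmaZ ζ) + (4/3:ℂ)*ζ^5*ζ⁻¹^8 + (4/3:ℂ)*ζ^5*ζ⁻¹^8*(plasmaZ ζ)*α*Complex.I + (2:ℂ)*ζ^5*ζ⁻¹^9*α*Complex.I + (2/3:ℂ)*ζ^5*ζ⁻¹^10 + (2/3:ℂ)*ζ^5*ζ⁻¹^11*α*Complex.I + (2/3:ℂ)*ζ^6*ζ⁻¹^4*(plasmaZ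 ζ)^2*α*Complex.I + (4/3:ℂ)*ζ^6*ζ⁻¹^5*(plasmaZ ζ)*α*Complex.I + (2/3:ℂ)*ζ^6*ζ⁻¹^5*(plasmaZ ζ)^2 + (2/3:ℂ)*ζ^6*ζ⁻¹^6*α*Complex.I + (4/3:ℂ)*ζ^6*ζ⁻¹^6*(plasmaZ ζ) + (2/3:ℂ)*ζ^6*ζ⁻¹^6*(plasmaZ ζ)^2*α*Complex.I + (2/3:ℂ)*ζ^6*ζ⁻¹^7 + (8/3:ℂ)*ζ^6*ζ⁻¹^7*(plasmaZ ζ)*α*Complex.I + (2:ℂ)*ζ^6*ζ⁻¹^8*α*Complex.I + (4/3:ℂ)*ζ^6*ζ⁻¹^8*(plasmaZ ζ) + (4/3:ℂ)*ζ^6*ζ⁻¹^9 + (4/3:ℂ)*ζ^6*ζ⁻¹^9*(plasmaZ ζ)*α*Complex.I + (2:ℂ)*ζ^6*ζ⁻¹^10*α*Complex.I + (2/3:ℂ)*ζ^6*ζ⁻¹^11 + (2/3:ℂ)*ζ^6*ζ⁻¹^12*α*Complex.I + (2/3:ℂ)*ζ^7*ζ⁻¹^5*(plasmaZ ζ)^2*α*Complex.I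 + (4/3:ℂ)*ζ^7*ζ⁻¹^6*(plasmaZ ζ)*α*Complex.I + (2/3:ℂ)*ζ^7*ζ⁻¹^6*(plasmaZ ζ)^2 + (2/3:ℂ)*ζ^7*ζ⁻¹^7*α*Complex.I + (4/3:ℂ)*ζ^7*ζ⁻¹^7*(plasmaZ ζ) + (2/3:ℂ)*ζ^7*ζ⁻¹^7*(plasmaZ ζ)^2*α*Complex.I + (2/3:ℂ)*ζ^7*ζ⁻¹^8 + (8/3:ℂ)*ζ^7*ζ⁻¹^8*(plasmaZ ζ)*α*Complex.I + (2:ℂ)*ζ^7*ζ⁻¹^9*α*Complex.I + (4/3:ℂ)*ζ^7*ζ⁻¹^9*(plasmaZ ζ) + (4/3:ℂ)*ζ^7*ζ⁻¹^10 + (4/3:ℂ)*ζ^7*ζ⁻¹^10*(plasmaZ ζ)*α*Complex.I + (2:ℂ)*ζ^7*ζ⁻¹^11*α*Complex.I + (2/3:ℂ)*ζ^7*ζ⁻¹^12 + (2/3:ℂ)*ζ^7*ζ⁻¹^13*α*Complex.I + (2/3:ℂ)*ζ^8*ζ⁻¹^6*(plasmaZ ζ)^2*α*Complex.I + (4/3:ℂ)*ζ^8*ζ⁻¹^7*(plasmaZ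 ζ)*α*Complex.I + (2/3:ℂ)*ζ^8*ζ⁻¹^7*(plasmaZ ζ)^2 + (2/3:ℂ)*ζ^8*ζ⁻¹^8*α*Complex.I + (4/3:ℂ)*ζ^8*ζ⁻¹^8*(plasmaZ ζ) + (2/3:ℂ)*ζ^8*ζ⁻¹^8*(plasmaZ ζ)^2*α*Complex.I + (2/3:ℂ)*ζ^8*ζ⁻¹^9 + (8/3:ℂ)*ζ^8*ζ⁻¹^9*(plasmaZ ζ)*α*Complex.I + (2:ℂ)*ζ^8*ζ⁻¹^10*α*Complex.I + (4/3:ℂ)*ζ^8*ζ⁻¹^10*(plasmaZ ζ) + (4/3:ℂ)*ζ^8*ζ⁻¹^11 + (4/3:ℂ)*ζ^8*ζ⁻¹^11*(plasmaZ ζ)*α*Complex.I + (2:ℂ)*ζ^8*ζ⁻¹^12*α*Complex.I + (2/3:ℂ)*ζ^8*ζ⁻¹^13 + (2/3:ℂ)*ζ^8*ζ⁻¹^14*α*Complex.I + (2/3:ℂ)*ζ^9*ζ⁻¹^7*(plasmaZ ζ)^2*α*Complex.I + (4/3:ℂ)*ζ^9*ζ⁻¹^8*(plasmaZ ζ)*α*Complex.I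 + (2/3:ℂ)*ζ^9*ζ⁻¹^8*(plasmaZ ζ)^2 + (2/3:ℂ)*ζ^9*ζ⁻¹^9*α*Complex.I + (4/3:ℂ)*ζ^9*ζ⁻¹^9*(plasmaZ ζ) + (2/3:ℂ)*ζ^9*ζ⁻¹^9*(plasmaZ ζ)^2*α*Complex.I + (2/3:ℂ)*ζ^9*ζ⁻¹^10 + (8/3:ℂ)*ζ^9*ζ⁻¹^10*(plasmaZ ζ)*α*Complex.I + (2:ℂ)*ζ^9*ζ⁻¹^11*α*Complex.I + (4/3:ℂ)*ζ^9*ζ⁻¹^11*(plasmaZ ζ) + (4/3:ℂ)*ζ^9*ζ⁻¹^12 + (4/3:ℂ)*ζ^9*ζ⁻¹^12*(plasmaZ ζ)*α*Complex.I + (2:ℂ)*ζ^9*ζ⁻¹^13*α*Complex.I + (2/3:ℂ)*ζ^9*ζ⁻¹^14 + (2/3:ℂ)*ζ^9*ζ⁻¹^15*α*Complex.I) * hu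

/-- The filter of `ζ → ∞` within the cone `|arg ζ| ≤ π/2 - δ` in the upper half-plane. -/
noncomputable def coneAtInfty (δ : ℝ) : Filter ℂ :=
  Filter.comap (fun z : ℂ => ‖z‖) Filter.atTop ⊓
    Filter.principal {ζ : ℂ | |Complex.arg ζ| ≤ π / 2 - δ ∧ 0 < ζ.im}

/-- In any cone `|arg ζ| ≤ π/2 - δ` in the upper half-plane, the spectral function tends to the
constant `i(kτ)³` as `ζ → ∞`, the error being `O(|ζ|⁻¹)`. -/
theorem specGamma_cone_asymptotics (τ k : ℝ) (hτ : 0 < τ) (hk : 0 < k)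
    (δ : ℝ) (hδ₁ : 0 < δ) (hδ₂ : δ ≤ π / 2) :
    Tendsto (specGamma τ k) (coneAtInfty δ)
      (nhds (Complex.I * ((k*τ:ℝ):ℂ)^3)) ∧
    (fun ζ : ℂ => specGamma τ k ζ - Complex.I * ((k*τ:ℝ):ℂ)^3)
      =O[coneAtInfty δ] fun ζ : ℂ => ‖ζ‖⁻¹ := by
  set α : ℂ := ((k*τ:ℝ):ℂ) with hα
  set β : ℂ := Complex.I * α with hβ
  set s : ℝ := Real.sin δ with hsdef
  have hs : 0 < s := Real.sin_pos_of_pos_of_lt_pi hδ₁ (by linarith [Real.pi_pos])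
  have hs1 : s ≤ 1 := Real.sin_le_one δ
  obtain ⟨C, hC0, hCb⟩ := remainder_bound hs hs1
  set L := coneAtInfty δ with hL
  set CG : ℝ := mbound (list0 α β) + C * mbound (list1 α β) + C^2 * mbound (list2 α β) with hCG
  have hev_abs : ∀ M : ℝ, ∀ᶠ ζ in L, M ≤ ‖ζ‖ := by
    intro M
    have h1 : ∀ᶠ ζ in Filter.comap (fun z : ℂ => ‖z‖) Filter.atTop, M ≤ ‖ζ‖ :=
      tendsto_comap.eventually (Filter.eventually_ge_atTop M)
    exact h1.filter_mono inf_le_left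
  have hev_cone : ∀ᶠ ζ in L, |Complex.arg ζ| ≤ π / 2 - δ ∧ 0 < ζ.im := by
    have h2 : ∀ᶠ ζ in Filter.principal {ζ : ℂ | |Complex.arg ζ| ≤ π / 2 - δ ∧ 0 < ζ.im},
        |Complex.arg ζ| ≤ π / 2 - δ ∧ 0 < ζ.im := by
      rw [Filter.eventually_principal]; exact fun ζ h => h
    exact h2.filter_mono inf_le_right
  have hmain : ∀ᶠ ζ in L, ‖specGamma τ k ζ - Complex.I * α ^ 3‖ ≤ CG * ‖ζ‖⁻¹ := by
    filter_upwards [hev_abs (max (max π (2/s)) 1), hev_cone] with ζ hMζ hconeζ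
    obtain ⟨harg, him⟩ := hconeζ
    have hπA : π ≤ ‖ζ‖ :=
      le_trans (le_trans (le_max_left π (2/s)) (le_max_left _ 1)) hMζ
    have h2s : 2/s ≤ ‖ζ‖ :=
      le_trans (le_trans (le_max_right π (2/s)) (le_max_left _ 1)) hMζ
    have h1A : (1:ℝ) ≤ ‖ζ‖ := le_trans (le_max_right _ 1) hMζ
    have habs_pos : 0 < ‖ζ‖ := lt_of_lt_of_le Real.pi_pos hπA
    have hζ0 : ζ ≠ 0 := by
      intro h; rw [h] at him; simp at him
    have hcos : s ≤ Real.cos ζ.arg := by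
      have h1 := Real.cos_le_cos_of_nonneg_of_le_pi (abs_nonneg (Complex.arg ζ))
        (by linarith [Real.pi_pos] : π / 2 - δ ≤ π) harg
      rw [Real.cos_abs, Real.cos_pi_div_two_sub] at h1
      exact h1
    have hre_eq : ζ.re = Real.cos ζ.arg * ‖ζ‖ := by
      rw [Complex.cos_arg hζ0]
      field_simp
    have hre : s * ‖ζ‖ ≤ ζ.re := by
      rw [hre_eq]
      exact mul_le_mul_of_nonneg_right hcos (le_of_lt habs_pos)
    have h2re : 2 ≤ ζ.re := by
      have h2 : (2:ℝ) = s * (2/s) := by field_simp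
      calc (2:ℝ) = s * (2/s) := h2
        _ ≤ s * ‖ζ‖ := mul_le_mul_of_nonneg_left h2s (le_of_lt hs)
        _ ≤ ζ.re := hre
    have hJ := hCb ζ him hre h2re hπA
    have hplasma := plasmaZ_expand ζ him
    have hu : ζ * ζ⁻¹ = 1 := mul_inv_cancel₀ hζ0
    set J : ℂ := ∫ v : ℝ, (v:ℂ) ^ 4 * Complex.exp (-(v:ℂ) ^ 2 / 2) / ((v:ℂ) - ζ) with hJdef
    have hWeq : Wfun ζ = ((Real.sqrt (2 * π) : ℂ))⁻¹ * ζ * J := by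
      rw [Wfun, hplasma]
      linear_combination (norm := ring)
        (((Real.sqrt (2 * π) : ℂ))⁻¹ * J * ζ *
          (ζ⁻¹^3*ζ^3 + ζ⁻¹^2*ζ^2 + ζ⁻¹*ζ + 1)) * hu
    have hc' : ‖((Real.sqrt (2 * π) : ℝ) : ℂ)⁻¹‖ ≤ 1 := by
      rw [norm_inv, Complex.norm_real, Real.norm_eq_abs,
        _root_.abs_of_nonneg (Real.sqrt_nonneg _)]
      apply inv_le_one_of_one_le₀
      rw [show (1:ℝ) = Real.sqrt 1 by simp]
      exact Real.sqrt_le_sqrt (by nlinarith [Real.pi_gt_three])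
    have hWnorm : ‖Wfun ζ‖ ≤ C := by
      rw [hWeq, norm_mul, norm_mul]
      calc ‖((Real.sqrt (2 * π) : ℝ) : ℂ)⁻¹‖ * ‖ζ‖ * ‖J‖
          ≤ 1 * ‖ζ‖ * (C / ‖ζ‖) := by
            apply mul_le_mul (mul_le_mul hc' le_rfl (norm_nonneg _) zero_le_one) hJ
              (norm_nonneg _) (by positivity)
        _ = C := by
            rw [one_mul]
            field_simp
    have hu1 : ‖ζ⁻¹‖ ≤ 1 := by
      rw [norm_inv]
      apply inv_le_one_of_one_le₀
      exact h1A
    rw [spec_identity τ k ζ hζ0]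
    rw [norm_mul, norm_inv]
    have hG : ‖msum ζ⁻¹ (list0 α β) + Wfun ζ * msum ζ⁻¹ (list1 α β)
        + (Wfun ζ) ^ 2 * msum ζ⁻¹ (list2 α β)‖ ≤ CG := by
      calc ‖msum ζ⁻¹ (list0 α β) + Wfun ζ * msum ζ⁻¹ (list1 α β)
            + (Wfun ζ) ^ 2 * msum ζ⁻¹ (list2 α β)‖
          ≤ ‖msum ζ⁻¹ (list0 α β) + Wfun ζ * msum ζ⁻¹ (list1 α β)‖
            + ‖(Wfun ζ) ^ 2 * msum ζ⁻¹ (list2 α β)‖ := norm_add_le _ _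
        _ ≤ (‖msum ζ⁻¹ (list0 α β)‖ + ‖Wfun ζ * msum ζ⁻¹ (list1 α β)‖)
            + ‖(Wfun ζ) ^ 2 * msum ζ⁻¹ (list2 α β)‖ :=
            add_le_add_left (norm_add_le _ _) _
        _ ≤ (mbound (list0 α β) + C * mbound (list1 α β)) + C^2 * mbound (list2 α β) := by
            apply add_le_add
            apply add_le_add (msum_le hu1 _)
            · rw [norm_mul]
              exact mul_le_mul hWnorm (msum_le hu1 _) (norm_nonneg _) (le_of_lt hC0)
            · rw [norm_mul, norm_pow]
              apply mul_le_mul _ (msum_le hu1 _) (norm_nonneg _) (by positivity)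
              exact pow_le_pow_left₀ (norm_nonneg _) hWnorm 2
        _ = CG := rfl
    calc ‖ζ‖⁻¹ * ‖msum ζ⁻¹ (list0 α β) + Wfun ζ * msum ζ⁻¹ (list1 α β)
          + (Wfun ζ) ^ 2 * msum ζ⁻¹ (list2 α β)‖
        ≤ ‖ζ‖⁻¹ * CG := by
          apply mul_le_mul_of_nonneg_left hG (by positivity)
      _ = CG * ‖ζ‖⁻¹ := mul_comm _ _
  have hO : (fun ζ : ℂ => specGamma τ k ζ - Complex.I * α ^ 3) =O[L] fun ζ : ℂ => ‖ζ‖⁻¹ := by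
    apply Asymptotics.IsBigO.of_bound CG
    filter_upwards [hmain] with ζ h
    calc ‖specGamma τ k ζ - Complex.I * α ^ 3‖ ≤ CG * ‖ζ‖⁻¹ := h
      _ = CG * ‖(‖ζ‖⁻¹ : ℝ)‖ := by
          rw [Real.norm_eq_abs, _root_.abs_of_nonneg (by positivity)]
  have htend_abs : Tendsto (fun ζ : ℂ => ‖ζ‖) L atTop := by
    have h1 : Tendsto (fun ζ : ℂ => ‖ζ‖) L atTop := tendsto_comap.mono_left inf_le_left
    exact h1
  have hinv0 : Tendsto (fun ζ : ℂ => ‖ζ‖⁻¹) L (nhds 0) := htend_abs.inv_tendsto_atTop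
  have h0 : Tendsto (fun ζ : ℂ => specGamma τ k ζ - Complex.I * α ^ 3) L (nhds 0) :=
    hO.trans_tendsto hinv0
  exact ⟨tendsto_sub_nhds_zero_iff.mp h0, hO⟩
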